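/- arXiv:2004.10708 — 2 statements merged into one kernel-verified Lean document; each statement's English description precedes it below -/
import Mathlib

section
/- For positive definite matrices ρ₁, σ₁ on one space and ρ₂, σ₂ on another, and any α > 0, the geometric Rényi relative quasi-entropy is multiplicative under tensor products: Tr[(σ₁ ⊗ σ₂) (((σ₁ ⊗ σ₂)^{−1/2} (ρ₁ ⊗ ρ₂) (σ₁ ⊗ σ₂)^{−1/2})^α] = Tr[σ₁ (σ₁^{−1/2} ρ₁ σ₁^{−1/2})^α] · Tr[σ₂ (σ₂^{−1/2} ρ₂ σ₂^{−1/2})^α]. -/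
open Matrix
open scoped ComplexOrder Kronecker

/-- Functional calculus for Hermitian matrices: apply `f` to the eigenvalues. -/
noncomputable def matFun {d : Type*} [Fintype d] [DecidableEq d]
    (A : Matrix d d ℂ) (f : ℝ → ℝ) : Matrix d d ℂ :=
  if hA : A.IsHermitian then
    (hA.eigenvectorUnitary : Matrix d d ℂ) *
      Matrix.diagonal (fun i => (f (hA.eigenvalues i) : ℂ)) *
      (star hA.eigenvectorUnitary : Matrix d d ℂ)
  else 0

/-- Real matrix power of a Hermitian matrix via the functional calculus. -/
noncomputable def mrpow {d : Type*} [Fintype d] [DecidableEq d]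
    (A : Matrix d d ℂ) (r : ℝ) : Matrix d d ℂ :=
  matFun A (fun x => x ^ r)

/-- The geometric Rényi relative quasi-entropy `Q̂_α(ρ‖σ) = Tr[σ (σ^{-1/2} ρ σ^{-1/2})^α]`. -/
noncomputable def geomQuasiEntropy {d : Type*} [Fintype d] [DecidableEq d]
    (α : ℝ) (ρ σ : Matrix d d ℂ) : ℂ :=
  (σ * mrpow (mrpow σ (-(1 / 2)) * ρ * mrpow σ (-(1 / 2))) α).trace

section Aux

open Polynomial

variable {d : Type*} [Fintype d] [DecidableEq d]

/-- Conjugation by a unitary matrix, as an `ℝ`-algebra homomorphism. -/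
noncomputable def conjAlgHom {V : Matrix d d ℂ} (hV : V ∈ Matrix.unitaryGroup d ℂ) :
    Matrix d d ℂ →ₐ[ℝ] Matrix d d ℂ where
  toFun M := V * M * star V
  map_one' := by
    show V * 1 * star V = 1
    rw [mul_one, Matrix.mem_unitaryGroup_iff.mp hV]
  map_mul' M N := by
    have h1 : star V * V = 1 := Matrix.mem_unitaryGroup_iff'.mp hV
    simp only [mul_assoc]
    rw [← mul_assoc (star V) V, h1, one_mul]
  map_zero' := by simp
  map_add' M N := by noncomm_ring
  commutes' r := by
    show V * algebraMap ℝ (Matrix d d ℂ) r * star V = algebraMap ℝ (Matrix d d ℂ) r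
    rw [mul_assoc, Algebra.commutes, ← mul_assoc, Matrix.mem_unitaryGroup_iff.mp hV, one_mul]

lemma aeval_conj_diag {V : Matrix d d ℂ} (hV : V ∈ Matrix.unitaryGroup d ℂ)
    (c : d → ℝ) (p : ℝ[X]) :
    aeval (V * Matrix.diagonal (fun i => (c i : ℂ)) * star V) p =
      V * Matrix.diagonal (fun i => ((p.eval (c i) : ℝ) : ℂ)) * star V := by
  have h1 : V * Matrix.diagonal (fun i => (c i : ℂ)) * star V =
      conjAlgHom hV (Matrix.diagonalAlgHom ℝ (fun i => (c i : ℂ))) := rfl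
  rw [h1, aeval_algHom_apply, aeval_algHom_apply]
  have hfun : (aeval (fun i => ((c i : ℝ) : ℂ))) p = fun i => ((p.eval (c i) : ℝ) : ℂ) := by
    funext i
    have h2 := aeval_algHom_apply (Pi.evalAlgHom ℝ (fun _ => ℂ) i) (fun j => ((c j : ℝ) : ℂ)) p
    simp only [Pi.evalAlgHom_apply] at h2
    rw [← h2]
    have h3 : aeval (Complex.ofRealAm (c i)) p = Complex.ofRealAm (aeval (c i) p) :=
      aeval_algHom_apply Complex.ofRealAm _ p
    simpa [Complex.ofRealAm, aeval_def, ← eval₂_eq_eval_map] using h3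
  show V * Matrix.diagonal ((aeval (fun i => ((c i : ℝ) : ℂ))) p) * star V = _
  rw [hfun]

lemma isHermitian_conj_diag {V : Matrix d d ℂ} (hV : V ∈ Matrix.unitaryGroup d ℂ)
    (c : d → ℝ) :
    (V * Matrix.diagonal (fun i => (c i : ℂ)) * star V).IsHermitian := by
  have hD : (Matrix.diagonal (fun i => (c i : ℂ))).IsHermitian :=
    Matrix.isHermitian_diagonal_of_self_adjoint _ (funext fun i => Complex.conj_ofReal _)
  have := (Matrix.isHermitian_mul_mul_conjTranspose V hD)
  simpa [Matrix.star_eq_conjTranspose] using this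

/-- Functional calculus computed through *any* unitary diagonalization. -/
lemma matFun_conj_diag {V : Matrix d d ℂ} (hV : V ∈ Matrix.unitaryGroup d ℂ)
    (c : d → ℝ) (f : ℝ → ℝ) {A : Matrix d d ℂ}
    (hAV : A = V * Matrix.diagonal (fun i => (c i : ℂ)) * star V) :
    matFun A f = V * Matrix.diagonal (fun i => (f (c i) : ℂ)) * star V := by
  have hA : A.IsHermitian := hAV ▸ isHermitian_conj_diag hV c
  classical
  -- interpolation polynomial matching f on all relevant points
  set S : Finset ℝ := Finset.univ.image hA.eigenvalues ∪ Finset.univ.image c with hS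
  have hinj : Set.InjOn id (S : Set ℝ) := fun a _ b _ h => h
  set p : Polynomial ℝ := Lagrange.interpolate S id f with hp
  have heval : ∀ x ∈ S, p.eval x = f x := fun x hx => by
    exact Lagrange.eval_interpolate_at_node f hinj hx
  have hU := (Matrix.mem_unitaryGroup_iff).mpr
    ((Matrix.mem_unitaryGroup_iff).mp hA.eigenvectorUnitary.2)
  have hspec := hA.spectral_theorem
  have e1 : matFun A f =
      (hA.eigenvectorUnitary : Matrix d d ℂ) *
        Matrix.diagonal (fun i => (f (hA.eigenvalues i) : ℂ)) *
        (star hA.eigenvectorUnitary : Matrix d d ℂ) := by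
    rw [matFun, dif_pos hA]
  have hmemE : ∀ i, hA.eigenvalues i ∈ S := fun i =>
    Finset.mem_union_left _ (Finset.mem_image_of_mem _ (Finset.mem_univ i))
  have hmemC : ∀ i, c i ∈ S := fun i =>
    Finset.mem_union_right _ (Finset.mem_image_of_mem _ (Finset.mem_univ i))
  have e2 : matFun A f = Polynomial.aeval A p := by
    rw [e1]
    have : A = (hA.eigenvectorUnitary : Matrix d d ℂ) *
        Matrix.diagonal (fun i => ((hA.eigenvalues i : ℝ) : ℂ)) *
        (star hA.eigenvectorUnitary : Matrix d d ℂ) := by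
      exact hspec
    conv_rhs => rw [this]
    rw [aeval_conj_diag hA.eigenvectorUnitary.2]
    have hfe : (fun i => ((f (hA.eigenvalues i) : ℝ) : ℂ)) =
        fun i => ((p.eval (hA.eigenvalues i) : ℝ) : ℂ) :=
      funext fun i => by rw [heval _ (hmemE i)]
    rw [hfe]
  have e3 : Polynomial.aeval A p =
      V * Matrix.diagonal (fun i => (f (c i) : ℂ)) * star V := by
    rw [hAV, aeval_conj_diag hV]
    have hfe : (fun i => ((p.eval (c i) : ℝ) : ℂ)) = fun i => ((f (c i) : ℝ) : ℂ) :=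
      funext fun i => by rw [heval _ (hmemC i)]
    rw [hfe]
  rw [e2, e3]

lemma star_kronecker {d₁ d₂ : Type*} [Fintype d₁] [Fintype d₂]
    (M : Matrix d₁ d₁ ℂ) (N : Matrix d₂ d₂ ℂ) :
    star (M ⊗ₖ N) = star M ⊗ₖ star N := by
  ext ⟨i, j⟩ ⟨k, l⟩
  simp [Matrix.star_eq_conjTranspose, Matrix.conjTranspose_apply,
    Matrix.kroneckerMap_apply, mul_comm]

lemma kron_unitary {d₁ d₂ : Type*} [Fintype d₁] [Fintype d₂] [DecidableEq d₁] [DecidableEq d₂]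
    {U₁ : Matrix d₁ d₁ ℂ} {U₂ : Matrix d₂ d₂ ℂ}
    (h₁ : U₁ ∈ Matrix.unitaryGroup d₁ ℂ) (h₂ : U₂ ∈ Matrix.unitaryGroup d₂ ℂ) :
    U₁ ⊗ₖ U₂ ∈ Matrix.unitaryGroup (d₁ × d₂) ℂ := by
  rw [Matrix.mem_unitaryGroup_iff]
  rw [star_kronecker, ← Matrix.mul_kronecker_mul,
    Matrix.mem_unitaryGroup_iff.mp h₁, Matrix.mem_unitaryGroup_iff.mp h₂,
    Matrix.one_kronecker_one]

/-- Positive definiteness is preserved by conjugation with an invertible matrix. -/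
lemma PosDef.conj_of_isUnit {ρ C : Matrix d d ℂ} (hρ : ρ.PosDef) (hC : IsUnit C.det) :
    (Cᴴ * ρ * C).PosDef := by
  refine Matrix.PosDef.of_dotProduct_mulVec_pos
    (Matrix.isHermitian_conjTranspose_mul_mul C hρ.isHermitian) fun x hx => ?_
  have hCx : C *ᵥ x ≠ 0 := by
    intro h
    apply hx
    have : C⁻¹ *ᵥ (C *ᵥ x) = x := by
      rw [Matrix.mulVec_mulVec, Matrix.nonsing_inv_mul _ hC, Matrix.one_mulVec]
    rw [h, Matrix.mulVec_zero] at this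
    exact this.symm
  have := hρ.dotProduct_mulVec_pos hCx
  simpa only [Matrix.star_mulVec, dotProduct_mulVec, Matrix.vecMul_vecMul] using this

lemma mrpow_eq_of_decomp {V : Matrix d d ℂ} (hV : V ∈ Matrix.unitaryGroup d ℂ)
    (c : d → ℝ) (r : ℝ) {A : Matrix d d ℂ}
    (hAV : A = V * Matrix.diagonal (fun i => (c i : ℂ)) * star V) :
    mrpow A r = V * Matrix.diagonal (fun i => ((c i ^ r : ℝ) : ℂ)) * star V :=
  matFun_conj_diag hV c _ hAV

lemma unitary_det_isUnit {V : Matrix d d ℂ} (hV : V ∈ Matrix.unitaryGroup d ℂ) :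
    IsUnit V.det ∧ IsUnit (star V).det := by
  have h : (star V).det * V.det = 1 := by
    rw [← Matrix.det_mul, Matrix.mem_unitaryGroup_iff'.mp hV, Matrix.det_one]
  exact ⟨IsUnit.of_mul_eq_one _ (by rwa [mul_comm] at h), IsUnit.of_mul_eq_one _ h⟩

lemma posDef_conj_diag {V : Matrix d d ℂ} (hV : V ∈ Matrix.unitaryGroup d ℂ)
    {c : d → ℝ} (hc : ∀ i, 0 < c i) :
    (V * Matrix.diagonal (fun i => (c i : ℂ)) * star V).PosDef := by
  have hD : (Matrix.diagonal (fun i => (c i : ℂ))).PosDef := by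
    rw [Matrix.posDef_diagonal_iff]
    intro i
    exact_mod_cast hc i
  have h := PosDef.conj_of_isUnit hD (unitary_det_isUnit hV).2
  simpa [Matrix.star_eq_conjTranspose] using h

/-- `mrpow` of a positive definite matrix is positive definite. -/
lemma mrpow_posDef {A : Matrix d d ℂ} (hA : A.PosDef) (r : ℝ) : (mrpow A r).PosDef := by
  have hH := hA.isHermitian
  have hdec := hH.spectral_theorem
  have h1 : A = (hH.eigenvectorUnitary : Matrix d d ℂ) *
      Matrix.diagonal (fun i => ((hH.eigenvalues i : ℝ) : ℂ)) *
      (star hH.eigenvectorUnitary : Matrix d d ℂ) := by exact hdec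
  rw [mrpow_eq_of_decomp hH.eigenvectorUnitary.2 _ r h1]
  exact posDef_conj_diag hH.eigenvectorUnitary.2
    (fun i => Real.rpow_pos_of_pos (hA.eigenvalues_pos i) r)

/-- `mrpow` is multiplicative under Kronecker products of positive definite matrices. -/
lemma mrpow_kron {d₁ d₂ : Type*} [Fintype d₁] [Fintype d₂] [DecidableEq d₁] [DecidableEq d₂]
    {A : Matrix d₁ d₁ ℂ} {B : Matrix d₂ d₂ ℂ} (hA : A.PosDef) (hB : B.PosDef) (r : ℝ) :
    mrpow (A ⊗ₖ B) r = mrpow A r ⊗ₖ mrpow B r := by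
  have hHA := hA.isHermitian
  have hHB := hB.isHermitian
  have h1 : A = (hHA.eigenvectorUnitary : Matrix d₁ d₁ ℂ) *
      Matrix.diagonal (fun i => ((hHA.eigenvalues i : ℝ) : ℂ)) *
      (star hHA.eigenvectorUnitary : Matrix d₁ d₁ ℂ) := by exact hHA.spectral_theorem
  have h2 : B = (hHB.eigenvectorUnitary : Matrix d₂ d₂ ℂ) *
      Matrix.diagonal (fun i => ((hHB.eigenvalues i : ℝ) : ℂ)) *
      (star hHB.eigenvectorUnitary : Matrix d₂ d₂ ℂ) := by exact hHB.spectral_theorem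
  set U₁ := (hHA.eigenvectorUnitary : Matrix d₁ d₁ ℂ)
  set U₂ := (hHB.eigenvectorUnitary : Matrix d₂ d₂ ℂ)
  have hUk := kron_unitary hHA.eigenvectorUnitary.2 hHB.eigenvectorUnitary.2
  have hkron : A ⊗ₖ B = (U₁ ⊗ₖ U₂) *
      Matrix.diagonal (fun i : d₁ × d₂ =>
        ((hHA.eigenvalues i.1 * hHB.eigenvalues i.2 : ℝ) : ℂ)) * star (U₁ ⊗ₖ U₂) := by
    conv_lhs => rw [h1, h2]
    rw [Matrix.mul_kronecker_mul, Matrix.mul_kronecker_mul, star_kronecker,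
      Matrix.diagonal_kronecker_diagonal]
    congr 2
    funext i
    push_cast
    rfl
  rw [mrpow_eq_of_decomp hUk _ r hkron,
    mrpow_eq_of_decomp hHA.eigenvectorUnitary.2 _ r h1,
    mrpow_eq_of_decomp hHB.eigenvectorUnitary.2 _ r h2]
  conv_rhs => rw [Matrix.mul_kronecker_mul, Matrix.mul_kronecker_mul]
  rw [star_kronecker, Matrix.diagonal_kronecker_diagonal]
  have hfun : (fun i : d₁ × d₂ => (((hHA.eigenvalues i.1 * hHB.eigenvalues i.2) ^ r : ℝ) : ℂ)) =
      fun i : d₁ × d₂ => ((hHA.eigenvalues i.1 ^ r : ℝ) : ℂ) *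
        ((hHB.eigenvalues i.2 ^ r : ℝ) : ℂ) := by
    funext i
    rw [Real.mul_rpow (hA.eigenvalues_pos i.1).le (hB.eigenvalues_pos i.2).le]
    push_cast
    rfl
  rw [hfun]


end Aux

/-- **Multiplicativity of the geometric Rényi relative quasi-entropy under tensor products:**
`Q̂_α(ρ₁ ⊗ ρ₂ ‖ σ₁ ⊗ σ₂) = Q̂_α(ρ₁‖σ₁) · Q̂_α(ρ₂‖σ₂)` for positive definite inputs and `α > 0`. -/
theorem geomQuasiEntropy_kronecker {n m : ℕ}
    (ρ₁ σ₁ : Matrix (Fin n) (Fin n) ℂ) (ρ₂ σ₂ : Matrix (Fin m) (Fin m) ℂ)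
    (hρ₁ : ρ₁.PosDef) (hσ₁ : σ₁.PosDef) (hρ₂ : ρ₂.PosDef) (hσ₂ : σ₂.PosDef)
    (α : ℝ) (hα : 0 < α) :
    geomQuasiEntropy α (ρ₁ ⊗ₖ ρ₂) (σ₁ ⊗ₖ σ₂) =
      geomQuasiEntropy α ρ₁ σ₁ * geomQuasiEntropy α ρ₂ σ₂ := by
  unfold geomQuasiEntropy
  set C₁ := mrpow σ₁ (-(1 / 2)) with hC₁def
  set C₂ := mrpow σ₂ (-(1 / 2)) with hC₂def
  have hk : mrpow (σ₁ ⊗ₖ σ₂) (-(1 / 2)) = C₁ ⊗ₖ C₂ := mrpow_kron hσ₁ hσ₂ _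
  have hC₁pd : C₁.PosDef := mrpow_posDef hσ₁ _
  have hC₂pd : C₂.PosDef := mrpow_posDef hσ₂ _
  have hX₁ : (C₁ * ρ₁ * C₁).PosDef := by
    have h := PosDef.conj_of_isUnit hρ₁ ((Matrix.isUnit_iff_isUnit_det _).mp hC₁pd.isUnit)
    rwa [hC₁pd.isHermitian.eq] at h
  have hX₂ : (C₂ * ρ₂ * C₂).PosDef := by
    have h := PosDef.conj_of_isUnit hρ₂ ((Matrix.isUnit_iff_isUnit_det _).mp hC₂pd.isUnit)
    rwa [hC₂pd.isHermitian.eq] at h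
  rw [hk, show (C₁ ⊗ₖ C₂) * (ρ₁ ⊗ₖ ρ₂) * (C₁ ⊗ₖ C₂) = (C₁ * ρ₁ * C₁) ⊗ₖ (C₂ * ρ₂ * C₂) by
      rw [Matrix.mul_kronecker_mul, Matrix.mul_kronecker_mul],
    mrpow_kron hX₁ hX₂ α, ← Matrix.mul_kronecker_mul, Matrix.trace_kronecker]
end

section
/- Let ρ be a density matrix (positive semidefinite with trace 1) and σ a positive definite matrix with Tr[σ] ≤ 1, and let α ∈ (0,1) ∪ (1,2]. If the geometric Rényi relative entropy D̂_α(ρ‖σ) = (α−1)⁻¹ ln Tr[σ (σ^{−1/2} ρ σ^{−1/2})^α] equals zero, and ρ is positive definite, then ρ = σ. -/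
open Matrix
open scoped ComplexOrder

section aux
variable {d : Type*} [Fintype d] [DecidableEq d] {A : Matrix d d ℂ}

lemma matFun_eq (hA : A.IsHermitian) (f : ℝ → ℝ) :
    matFun A f = (hA.eigenvectorUnitary : Matrix d d ℂ) *
      Matrix.diagonal (fun i => (f (hA.eigenvalues i) : ℂ)) *
      star (hA.eigenvectorUnitary : Matrix d d ℂ) := dif_pos hA

lemma matFun_mul (hA : A.IsHermitian) (f g : ℝ → ℝ) :
    matFun A f * matFun A g = matFun A (fun x => f x * g x) := by
  rw [matFun_eq hA, matFun_eq hA, matFun_eq hA]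
  set U := (hA.eigenvectorUnitary : Matrix d d ℂ)
  have h1 : star U * U = 1 := Unitary.coe_star_mul_self hA.eigenvectorUnitary
  calc U * diagonal (fun i => (f (hA.eigenvalues i) : ℂ)) * star U *
        (U * diagonal (fun i => (g (hA.eigenvalues i) : ℂ)) * star U)
      = U * (diagonal (fun i => (f (hA.eigenvalues i) : ℂ)) * (star U * U) *
          diagonal (fun i => (g (hA.eigenvalues i) : ℂ))) * star U := by
        simp only [Matrix.mul_assoc]
    _ = U * diagonal (fun i => ((f (hA.eigenvalues i) * g (hA.eigenvalues i) : ℝ) : ℂ)) * star U := by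
        rw [h1, Matrix.mul_one, diagonal_mul_diagonal]
        push_cast
        rfl

lemma matFun_congr (hA : A.IsHermitian) {f g : ℝ → ℝ}
    (h : ∀ i, f (hA.eigenvalues i) = g (hA.eigenvalues i)) : matFun A f = matFun A g := by
  rw [matFun_eq hA, matFun_eq hA]
  have : (fun i => (f (hA.eigenvalues i) : ℂ)) = (fun i => (g (hA.eigenvalues i) : ℂ)) :=
    funext fun i => by rw [h i]
  rw [this]

lemma matFun_one (hA : A.IsHermitian) : matFun A (fun _ => 1) = 1 := by
  rw [matFun_eq hA]
  have h1 : (hA.eigenvectorUnitary : Matrix d d ℂ) * star (hA.eigenvectorUnitary : Matrix d d ℂ) = 1 :=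
    (Matrix.mem_unitaryGroup_iff).mp hA.eigenvectorUnitary.2
  simp only [Complex.ofReal_one, diagonal_one, Matrix.mul_one, h1]

lemma matFun_id (hA : A.IsHermitian) : matFun A (fun x => x) = A := by
  rw [matFun_eq hA]
  exact hA.spectral_theorem.symm

set_option maxHeartbeats 1000000 in
lemma posDef_conj {B B' : Matrix d d ℂ} (hA : A.PosDef) (hB : B' * B = 1) :
    (Bᴴ * A * B).PosDef := by
  refine Matrix.PosDef.of_dotProduct_mulVec_pos (isHermitian_conjTranspose_mul_mul B hA.1) ?_
  intro x hx
  have hBx : B *ᵥ x ≠ 0 := by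
    intro h
    apply hx
    have : B' *ᵥ (B *ᵥ x) = x := by rw [mulVec_mulVec, hB, one_mulVec]
    rw [← this, h, mulVec_zero]
  simpa only [star_mulVec, dotProduct_mulVec, vecMul_vecMul] using hA.dotProduct_mulVec_pos hBx

lemma conj_posDef {U D : Matrix d d ℂ} (hD : D.PosDef) (hU : U * star U = 1) :
    (U * D * star U).PosDef := by
  have h2 : U * D * star U = (star U)ᴴ * D * (star U) := by
    rw [star_eq_conjTranspose, conjTranspose_conjTranspose]
  rw [h2]
  exact posDef_conj hD hU

lemma matFun_posDef (hA : A.PosDef) (f : ℝ → ℝ) (hf : ∀ x, 0 < x → 0 < f x) :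
    (matFun A f).PosDef := by
  rw [matFun_eq hA.1]
  have h1 : (hA.1.eigenvectorUnitary : Matrix d d ℂ) * star (hA.1.eigenvectorUnitary : Matrix d d ℂ) = 1 :=
    (Matrix.mem_unitaryGroup_iff).mp hA.1.eigenvectorUnitary.2
  have hD : (diagonal (fun i => (f (hA.1.eigenvalues i) : ℂ))).PosDef :=
    Matrix.PosDef.diagonal fun i =>
      Complex.zero_lt_real.mpr (hf _ (hA.eigenvalues_pos i))
  exact conj_posDef hD h1

lemma trace_mul_matFun (hA : A.IsHermitian) (B : Matrix d d ℂ) (f : ℝ → ℝ) :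
    (B * matFun A f).trace =
      ∑ i, ((star (hA.eigenvectorUnitary : Matrix d d ℂ) * B *
        (hA.eigenvectorUnitary : Matrix d d ℂ)) i i) * (f (hA.eigenvalues i) : ℂ) := by
  rw [matFun_eq hA]
  set U := (hA.eigenvectorUnitary : Matrix d d ℂ)
  have : B * (U * diagonal (fun i => (f (hA.eigenvalues i) : ℂ)) * star U)
      = (B * U * diagonal (fun i => (f (hA.eigenvalues i) : ℂ))) * star U := by
    simp only [Matrix.mul_assoc]
  rw [this, Matrix.trace_mul_comm]
  have : star U * (B * U * diagonal (fun i => (f (hA.eigenvalues i) : ℂ)))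
      = (star U * B * U) * diagonal (fun i => (f (hA.eigenvalues i) : ℂ)) := by
    simp only [Matrix.mul_assoc]
  rw [this]
  simp [Matrix.trace, Matrix.diag, Matrix.mul_diagonal]

end aux

lemma key_scalar {n : ℕ} (α : ℝ) (hα : α ∈ Set.Ioo (0:ℝ) 1 ∪ Set.Ioc 1 2)
    (w μ : Fin n → ℝ) (hw : ∀ i, 0 < w i) (hμ : ∀ i, 0 < μ i)
    (hW : ∑ i, w i ≤ 1) (h1 : ∑ i, w i * μ i = 1) (h2 : ∑ i, w i * μ i ^ α = 1) :
    ∀ i, μ i = 1 := by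
  have expand : ∑ i, w i * (1 + α * (μ i - 1)) = (1 - α) * (∑ i, w i) + α := by
    have h : ∀ i, w i * (1 + α * (μ i - 1)) = (1 - α) * w i + α * (w i * μ i) := fun i => by ring
    simp_rw [h, Finset.sum_add_distrib, ← Finset.mul_sum, h1, mul_one]
  have hs : ∀ i, (-1 : ℝ) ≤ μ i - 1 := fun i => by linarith [hμ i]
  have hrw : ∀ i, (1 + (μ i - 1)) = μ i := fun i => by ring
  rcases hα with h | h
  · -- α ∈ (0,1)
    have hpt : ∀ i ∈ Finset.univ, w i * μ i ^ α ≤ w i * (1 + α * (μ i - 1)) := by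
      intro i _
      refine mul_le_mul_of_nonneg_left ?_ (hw i).le
      have := rpow_one_add_le_one_add_mul_self (hs i) h.1.le h.2.le
      rwa [hrw i] at this
    have hB : ∑ i, w i * (1 + α * (μ i - 1)) ≤ 1 := by
      rw [expand]; nlinarith [h.1, h.2]
    have heq : ∑ i, w i * μ i ^ α = ∑ i, w i * (1 + α * (μ i - 1)) := by
      refine le_antisymm (Finset.sum_le_sum hpt) ?_
      rw [h2]; linarith [Finset.sum_le_sum hpt, hB, h2]
    intro i
    by_contra hne
    have hptEq := (Finset.sum_eq_sum_iff_of_le hpt).mp heq i (Finset.mem_univ i)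
    have : μ i ^ α = 1 + α * (μ i - 1) := mul_left_cancel₀ (hw i).ne' hptEq
    have hlt := rpow_one_add_lt_one_add_mul_self (hs i) (by intro hc; exact hne (by linarith)) h.1 h.2
    rw [hrw i] at hlt
    linarith
  · -- α ∈ (1,2]
    have hpt : ∀ i ∈ Finset.univ, w i * (1 + α * (μ i - 1)) ≤ w i * μ i ^ α := by
      intro i _
      refine mul_le_mul_of_nonneg_left ?_ (hw i).le
      have := one_add_mul_self_le_rpow_one_add (hs i) h.1.le
      rwa [hrw i] at this
    have hB : (1:ℝ) ≤ ∑ i, w i * (1 + α * (μ i - 1)) := by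
      rw [expand]; nlinarith [h.1]
    have heq : ∑ i, w i * (1 + α * (μ i - 1)) = ∑ i, w i * μ i ^ α := by
      refine le_antisymm (Finset.sum_le_sum hpt) ?_
      rw [h2]; exact hB
    intro i
    by_contra hne
    have hptEq := (Finset.sum_eq_sum_iff_of_le hpt).mp heq i (Finset.mem_univ i)
    have : 1 + α * (μ i - 1) = μ i ^ α := mul_left_cancel₀ (hw i).ne' hptEq
    have hlt := one_add_mul_self_lt_rpow_one_add (hs i) (by intro hc; exact hne (by linarith)) h.1
    rw [hrw i] at hlt
    linarith

lemma diag_entry_of_posDef {d : Type*} [Fintype d] [DecidableEq d]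
    {N : Matrix d d ℂ} (hN : N.PosDef) (i : d) :
    N i i = ((N i i).re : ℂ) ∧ 0 < (N i i).re := by
  have hx : (Pi.single i 1 : d → ℂ) ≠ 0 := by
    intro h
    have := congrFun h i
    simp at this
  have h := hN.dotProduct_mulVec_pos hx
  have hdp : star (Pi.single i 1 : d → ℂ) ⬝ᵥ (N *ᵥ Pi.single i 1) = N i i := by
    simp [mulVec_single, dotProduct, Pi.single_apply, apply_ite, mul_ite, ite_mul]
  rw [hdp] at h
  rw [Complex.lt_def] at h
  obtain ⟨hre, him⟩ := h
  simp only [Complex.zero_re, Complex.zero_im] at hre him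
  exact ⟨Complex.ext rfl (by simp [← him]), hre⟩

/-- **Faithfulness of the geometric Rényi relative entropy.** If `ρ` is a positive definite
density matrix, `σ` is positive definite with `Tr[σ] ≤ 1`, `α ∈ (0,1) ∪ (1,2]`, and
`D̂_α(ρ‖σ) = (α-1)⁻¹ ln Tr[σ (σ^{-1/2} ρ σ^{-1/2})^α] = 0`, then `ρ = σ`. -/
theorem geomRenyi_faithful {n : ℕ}
    (ρ σ : Matrix (Fin n) (Fin n) ℂ) (hρ : ρ.PosDef) (hρ1 : ρ.trace = 1)
    (hσ : σ.PosDef) (hσ1 : σ.trace.re ≤ 1)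
    (α : ℝ) (hα : α ∈ Set.Ioo (0 : ℝ) 1 ∪ Set.Ioc 1 2)
    (hD : (α - 1)⁻¹ * Real.log (geomQuasiEntropy α ρ σ).re = 0) :
    ρ = σ := by
  rcases Nat.eq_zero_or_pos n with hn | hn
  · subst hn
    ext i j
    exact i.elim0
  have hσh := hσ.1
  have hev : ∀ i, 0 < hσh.eigenvalues i := hσ.eigenvalues_pos
  have hSinvPD : (mrpow σ (-(1 / 2))).PosDef :=
    matFun_posDef hσ _ (fun x hx => Real.rpow_pos_of_pos hx _)
  have hSPD : (mrpow σ (1 / 2)).PosDef :=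
    matFun_posDef hσ _ (fun x hx => Real.rpow_pos_of_pos hx _)
  have hSSinv : mrpow σ (1 / 2) * mrpow σ (-(1 / 2)) = 1 := by
    show matFun σ _ * matFun σ _ = 1
    rw [matFun_mul hσh,
      matFun_congr hσh (g := fun _ => 1) (fun i => by
        rw [← Real.rpow_add (hev i)]
        norm_num),
      matFun_one hσh]
  have hSinvS : mrpow σ (-(1 / 2)) * mrpow σ (1 / 2) = 1 := by
    show matFun σ _ * matFun σ _ = 1
    rw [matFun_mul hσh,
      matFun_congr hσh (g := fun _ => 1) (fun i => by
        rw [← Real.rpow_add (hev i)]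
        norm_num),
      matFun_one hσh]
  have hSS : mrpow σ (1 / 2) * mrpow σ (1 / 2) = σ := by
    show matFun σ _ * matFun σ _ = σ
    rw [matFun_mul hσh,
      matFun_congr hσh (g := fun x => x) (fun i => by
        rw [← Real.rpow_add (hev i)]
        norm_num),
      matFun_id hσh]
  have hσSinv : σ * mrpow σ (-(1 / 2)) = mrpow σ (1 / 2) := by
    nth_rewrite 1 [← hSS]
    rw [Matrix.mul_assoc, hSSinv, Matrix.mul_one]
  set X := mrpow σ (-(1 / 2)) * ρ * mrpow σ (-(1 / 2)) with hXdef
  have hXPD : X.PosDef := by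
    have h : X = (mrpow σ (-(1 / 2)))ᴴ * ρ * (mrpow σ (-(1 / 2))) := by
      rw [hXdef, hSinvPD.1.eq]
    rw [h]
    exact posDef_conj hρ hSSinv
  have hXh := hXPD.1
  have hμ : ∀ i, 0 < hXh.eigenvalues i := hXPD.eigenvalues_pos
  set Vc := (hXh.eigenvectorUnitary : Matrix (Fin n) (Fin n) ℂ) with hVc
  set N := star Vc * σ * Vc with hN
  have hVc1 : Vc * star Vc = 1 := (Matrix.mem_unitaryGroup_iff).mp hXh.eigenvectorUnitary.2
  have hVc2 : star Vc * Vc = 1 := Unitary.coe_star_mul_self hXh.eigenvectorUnitary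
  have hNPD : N.PosDef := by
    have h : N = Vcᴴ * σ * Vc := by rw [hN, star_eq_conjTranspose]
    rw [h]
    exact posDef_conj hσ hVc2
  set w := fun i => (N i i).re with hw
  have hwpos : ∀ i, 0 < w i := fun i => (diag_entry_of_posDef hNPD i).2
  have hNdiag : ∀ i, N i i = ((w i : ℝ) : ℂ) := fun i => (diag_entry_of_posDef hNPD i).1
  -- quasi-entropy as a sum
  have hQ : geomQuasiEntropy α ρ σ = ∑ i, N i i * ((hXh.eigenvalues i ^ α : ℝ) : ℂ) := by
    rw [geomQuasiEntropy, ← hXdef]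
    show (σ * matFun X _).trace = _
    rw [trace_mul_matFun hXh]
  have hQre : (geomQuasiEntropy α ρ σ).re = ∑ i, w i * (hXh.eigenvalues i ^ α) := by
    rw [hQ, Complex.re_sum]
    refine Finset.sum_congr rfl fun i _ => ?_
    rw [hNdiag i, ← Complex.ofReal_mul, Complex.ofReal_re]
  -- trace identity Tr[σ X] = 1
  have htrX : (σ * X).trace = 1 := by
    have h1 : σ * X = mrpow σ (1 / 2) * ρ * mrpow σ (-(1 / 2)) := by
      rw [hXdef, ← hσSinv]
      simp only [Matrix.mul_assoc]
    rw [h1, Matrix.trace_mul_comm, ← Matrix.mul_assoc, hSinvS, Matrix.one_mul, hρ1]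
  have hsum1 : ∑ i, w i * hXh.eigenvalues i = 1 := by
    have h2 : (σ * X).trace = ∑ i, N i i * ((hXh.eigenvalues i : ℝ) : ℂ) := by
      conv_lhs => rw [← matFun_id hXh]
      rw [trace_mul_matFun hXh]
    rw [htrX] at h2
    have h3 := congrArg Complex.re h2.symm
    rw [Complex.re_sum, Complex.one_re] at h3
    rw [← h3]
    refine Finset.sum_congr rfl fun i _ => ?_
    rw [hNdiag i, ← Complex.ofReal_mul, Complex.ofReal_re]
  -- sum of weights
  have hsumW : ∑ i, w i ≤ 1 := by
    have h1 : N.trace = σ.trace := by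
      rw [hN, Matrix.trace_mul_comm, ← Matrix.mul_assoc, hVc1, Matrix.one_mul]
    have h2 : ∑ i, w i = σ.trace.re := by
      rw [← h1, Matrix.trace, Complex.re_sum]
      rfl
    rw [h2]; exact hσ1
  -- α ≠ 1 and Q.re = 1
  have hα1 : α ≠ 1 := by
    rcases hα with h | h
    · exact ne_of_lt h.2
    · exact ne_of_gt h.1
  have hlog : Real.log (geomQuasiEntropy α ρ σ).re = 0 := by
    rcases mul_eq_zero.mp hD with h | h
    · exact absurd (inv_eq_zero.mp h) (sub_ne_zero.mpr hα1)
    · exact h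
  have hQpos : 0 < (geomQuasiEntropy α ρ σ).re := by
    rw [hQre]
    have : Nonempty (Fin n) := ⟨⟨0, hn⟩⟩
    exact Finset.sum_pos (fun i _ => mul_pos (hwpos i) (Real.rpow_pos_of_pos (hμ i) α))
      Finset.univ_nonempty
  have hQ1 : ∑ i, w i * (hXh.eigenvalues i ^ α) = 1 := by
    rcases Real.log_eq_zero.mp hlog with h | h | h
    · exact absurd h (ne_of_gt hQpos)
    · rw [← hQre]; exact h
    · exact absurd h (by linarith)
  -- all eigenvalues are 1
  have hμ1 := key_scalar α hα w hXh.eigenvalues hwpos hμ hsumW hsum1 hQ1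
  have hX1 : X = 1 := by
    conv_lhs => rw [← matFun_id hXh]
    rw [matFun_congr hXh (g := fun _ => 1) (fun i => hμ1 i), matFun_one hXh]
  have hfin : mrpow σ (1 / 2) * X * mrpow σ (1 / 2) = ρ := by
    rw [hXdef]
    have h : mrpow σ (1 / 2) * (mrpow σ (-(1 / 2)) * ρ * mrpow σ (-(1 / 2))) * mrpow σ (1 / 2)
        = (mrpow σ (1 / 2) * mrpow σ (-(1 / 2))) * ρ * (mrpow σ (-(1 / 2)) * mrpow σ (1 / 2)) := by
      simp only [Matrix.mul_assoc]
    rw [h, hSSinv, hSinvS, Matrix.one_mul, Matrix.mul_one]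
  rw [hX1, Matrix.mul_one, hSS] at hfin
  exact hfin.symm
end
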